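/- Let K be a field, m ≥ 1, s ∈ ℤ^m, let P ∈ K[X]^{m×m} be nonsingular and in s-weak Popov form with s-pivot degree δ = (δ_1,…,δ_m), and let Q ∈ K[X]^{m×m} be in s-Popov form and left-unimodularly equivalent to P. Then the column degree of Q is δ, i.e., for each j the diagonal entry Q_{jj} has degree δ_j. -/

import Mathlib

open Polynomial Matrix

/-- Degree of a polynomial as an element of `WithBot ℤ`, with `degZ 0 = ⊥`. -/
noncomputable def degZ {K : Type*} [Field K] (p : Polynomial K) : WithBot ℤ :=
  p.degree.map (fun n : ℕ => (n : ℤ))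

/-- The `s`-degree of a row vector `p`: `max_j (deg p_j + s_j)`. -/
noncomputable def sdeg {K : Type*} [Field K] {ι : Type*} [Fintype ι]
    (s : ι → ℤ) (p : ι → Polynomial K) : WithBot ℤ :=
  Finset.univ.sup fun j => degZ (p j) + (s j : WithBot ℤ)

/-- `j` is the `s`-pivot index of the row `p`: the largest index at which the
`s`-degree of `p` is attained. -/
def IsPivotIndex {K : Type*} [Field K] {ι : Type*} [Fintype ι] [LinearOrder ι]
    (s : ι → ℤ) (p : ι → Polynomial K) (j : ι) : Prop :=
  degZ (p j) + (s j : WithBot ℤ) = sdeg s p ∧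
    ∀ k, j < k → degZ (p k) + (s k : WithBot ℤ) ≠ sdeg s p

/-- `P` is in `s`-Popov form: it is nonsingular, the `s`-pivot entries are monic and
on the diagonal, and in each column the nonpivot entries have degree less than
the pivot entry. -/
def IsPopov {K : Type*} [Field K] {m : ℕ} (s : Fin m → ℤ)
    (P : Matrix (Fin m) (Fin m) (Polynomial K)) : Prop :=
  P.det ≠ 0 ∧ (∀ i, IsPivotIndex s (P i) i) ∧ (∀ i, (P i i).Monic) ∧
    ∀ i j, i ≠ j → (P i j).degree < (P j j).degree

/-- `p` is an interpolant for `(E, J)`: `∑ i, (row i of E) ⋅ (p i)(J) = 0`. -/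
def IsInterpolant {K : Type*} [Field K] {ι n : Type*} [Fintype ι] [Fintype n] [DecidableEq n]
    (E : Matrix ι n K) (J : Matrix n n K) (p : ι → Polynomial K) : Prop :=
  ∑ i, Matrix.vecMul (E i) (Polynomial.aeval J (p i)) = 0

/-- `P` is an interpolation basis for `(E, J)`: its rows form a basis of the
`K[X]`-module of interpolants for `(E, J)`. -/
def IsInterpolationBasis {K : Type*} [Field K] {ι n : Type*} [Fintype ι] [Fintype n]
    [DecidableEq n] (E : Matrix ι n K) (J : Matrix n n K)
    (P : Matrix ι ι (Polynomial K)) : Prop :=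
  LinearIndependent (Polynomial K) (fun i => P i) ∧
    (Submodule.span (Polynomial K) (Set.range fun i => P i) : Set (ι → Polynomial K))
      = {p | IsInterpolant E J p}

/-- The product `Q ⋅ E`: the matrix over `K` whose `i`-th row is `∑ j, (E j) ⋅ (Q i j)(J)`. -/
noncomputable def polMulMat {K : Type*} [Field K] {κ ι n : Type*} [Fintype κ] [Fintype ι]
    [Fintype n] [DecidableEq n]
    (Q : Matrix κ ι (Polynomial K)) (E : Matrix ι n K) (J : Matrix n n K) : Matrix κ n K :=
  fun i => ∑ j, Matrix.vecMul (E j) (Polynomial.aeval J (Q i j))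

/-- The `s`-leading matrix of `R`: if row `i` has `s`-degree `d`, its `(i,j)` entry is
the coefficient of degree `d - s j` in `R i j` (and `0` if row `i` is zero). -/
noncomputable def leadingMatrix {K : Type*} [Field K] {ι : Type*} [Fintype ι]
    (s : ι → ℤ) (R : Matrix ι ι (Polynomial K)) : Matrix ι ι K := fun i j =>
  WithBot.recBotCoe 0
    (fun d => if 0 ≤ d - s j then (R i j).coeff (d - s j).toNat else 0)
    (sdeg s (R i))

section Helpers

variable {K : Type*} [Field K]

lemma degZ_eq_bot_iff {p : K[X]} : degZ p = ⊥ ↔ p = 0 := by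
  unfold degZ
  rw [← Polynomial.degree_eq_bot]
  cases p.degree <;> simp

lemma degZ_zero : degZ (0 : K[X]) = ⊥ := degZ_eq_bot_iff.mpr rfl

lemma degZ_ne_bot {p : K[X]} (h : p ≠ 0) : degZ p ≠ ⊥ := fun hb => h (degZ_eq_bot_iff.mp hb)

lemma degZ_eq_natDegree {p : K[X]} (h : p ≠ 0) : degZ p = ((p.natDegree : ℤ) : WithBot ℤ) := by
  unfold degZ
  rw [Polynomial.degree_eq_natDegree h]
  rfl

lemma degZ_le_iff {p q : K[X]} : degZ p ≤ degZ q ↔ p.degree ≤ q.degree := by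
  unfold degZ
  cases p.degree <;> cases q.degree <;> simp

lemma degZ_lt_iff {p q : K[X]} : degZ p < degZ q ↔ p.degree < q.degree := by
  rw [lt_iff_le_not_ge, lt_iff_le_not_ge, degZ_le_iff, degZ_le_iff]

lemma degZ_mul (p q : K[X]) : degZ (p * q) = degZ p + degZ q := by
  unfold degZ
  rw [Polynomial.degree_mul]
  cases p.degree <;> cases q.degree <;> simp [← WithBot.coe_add]

lemma degZ_add_le (p q : K[X]) : degZ (p + q) ≤ max (degZ p) (degZ q) := by
  rcases le_total (degZ p) (degZ q) with h | h
  · rw [max_eq_right h]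
    exact degZ_le_iff.mpr ((Polynomial.degree_add_le p q).trans
      (max_le (degZ_le_iff.mp h) le_rfl))
  · rw [max_eq_left h]
    exact degZ_le_iff.mpr ((Polynomial.degree_add_le p q).trans
      (max_le le_rfl (degZ_le_iff.mp h)))

lemma degZ_add_eq_left {p q : K[X]} (h : degZ q < degZ p) : degZ (p + q) = degZ p := by
  unfold degZ
  rw [Polynomial.degree_add_eq_left_of_degree_lt (degZ_lt_iff.mp h)]

lemma zero_le_degZ {p : K[X]} (h : p ≠ 0) : (0 : WithBot ℤ) ≤ degZ p := by
  rw [degZ_eq_natDegree h]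
  exact_mod_cast Int.ofNat_nonneg _

lemma degZ_sum_add_le {ι : Type*} (t : Finset ι) (g : ι → K[X]) (c : WithBot ℤ) :
    degZ (∑ i ∈ t, g i) + c ≤ t.sup (fun i => degZ (g i) + c) := by
  classical
  induction t using Finset.induction with
  | empty => simp [degZ_zero]
  | insert a t' h ih =>
    rw [Finset.sum_insert h, Finset.sup_insert]
    have h1 : degZ (g a + ∑ i ∈ t', g i) + c
        ≤ max (degZ (g a)) (degZ (∑ i ∈ t', g i)) + c :=
      add_le_add_left (degZ_add_le _ _) c
    have hmono : Monotone (fun x : WithBot ℤ => x + c) := fun _ _ h => add_le_add_left h c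
    rw [hmono.map_max] at h1
    refine h1.trans ?_
    change _ ≤ max _ _
    exact max_le_max le_rfl ih

lemma entry_le_sdeg {ι : Type*} [Fintype ι] (s : ι → ℤ) (p : ι → K[X]) (k : ι) :
    degZ (p k) + (s k : WithBot ℤ) ≤ sdeg s p :=
  Finset.le_sup (f := fun j => degZ (p j) + (s j : WithBot ℤ)) (Finset.mem_univ k)

lemma sdeg_ne_bot {ι : Type*} [Fintype ι] {s : ι → ℤ} {p : ι → K[X]} (h : p ≠ 0) :
    sdeg s p ≠ ⊥ := by
  obtain ⟨k, hk⟩ := Function.ne_iff.mp h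
  intro hb
  have h1 := entry_le_sdeg s p k
  rw [hb, le_bot_iff] at h1
  exact (WithBot.add_ne_bot.mpr ⟨degZ_ne_bot hk, WithBot.coe_ne_bot⟩) h1

lemma pivot_entry_ne_zero {ι : Type*} [Fintype ι] [LinearOrder ι] {s : ι → ℤ}
    {p : ι → K[X]} {j : ι} (h : IsPivotIndex s p j) (hp : p ≠ 0) : p j ≠ 0 := by
  intro h0
  have h1 := h.1
  rw [h0, degZ_zero, WithBot.bot_add] at h1
  exact sdeg_ne_bot hp h1.symm

lemma pivot_unique {ι : Type*} [Fintype ι] [LinearOrder ι] {s : ι → ℤ}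
    {p : ι → K[X]} {j j' : ι} (h : IsPivotIndex s p j) (h' : IsPivotIndex s p j') :
    j = j' := by
  rcases lt_trichotomy j j' with hlt | heq | hlt
  · exact absurd h'.1 (h.2 j' hlt)
  · exact heq
  · exact absurd h.1 (h'.2 j hlt)

lemma key_lemma {m : ℕ} {s : Fin m → ℤ} {R : Matrix (Fin m) (Fin m) K[X]}
    {pv : Fin m → Fin m} (hpvinj : Function.Injective pv)
    (hrow : ∀ i, R i ≠ 0) (hpv : ∀ i, IsPivotIndex s (R i) (pv i))
    (u : Fin m → K[X]) {v : Fin m → K[X]} (hvdef : ∀ k, v k = ∑ i, u i * R i k)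
    (hv : v ≠ 0) {j : Fin m} (hj : IsPivotIndex s v j) :
    ∃ i, pv i = j ∧ degZ (R i j) ≤ degZ (v j) := by
  classical
  set f : Fin m → WithBot ℤ := fun i => degZ (u i) + sdeg s (R i) with hf
  set M : WithBot ℤ := Finset.univ.sup f with hM
  -- some u i is nonzero
  have hexu : ∃ i, u i ≠ 0 := by
    by_contra h0
    push_neg at h0
    apply hv
    funext k
    rw [hvdef k]
    simp [h0]
  obtain ⟨i0, hu0⟩ := hexu
  have hf0 : f i0 ≠ ⊥ := WithBot.add_ne_bot.mpr ⟨degZ_ne_bot hu0, sdeg_ne_bot (hrow i0)⟩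
  have hMbot : M ≠ ⊥ := by
    intro hb
    have := Finset.le_sup (f := f) (Finset.mem_univ i0)
    rw [← hM, hb, le_bot_iff] at this
    exact hf0 this
  have hMpos : (⊥ : WithBot ℤ) < M := bot_lt_iff_ne_bot.mpr hMbot
  -- choose argmax with maximal pivot index
  set A : Finset (Fin m) := Finset.univ.filter (fun i => f i = M) with hA
  have hAne : A.Nonempty := by
    obtain ⟨i1, _, hi1⟩ := Finset.exists_mem_eq_sup Finset.univ ⟨j, Finset.mem_univ j⟩ f
    exact ⟨i1, Finset.mem_filter.mpr ⟨Finset.mem_univ i1, hi1.symm⟩⟩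
  obtain ⟨istar, hisA, hmax⟩ := Finset.exists_max_image A pv hAne
  have hfis : f istar = M := (Finset.mem_filter.mp hisA).2
  have huis : u istar ≠ 0 := by
    intro h0
    apply hMbot
    rw [← hfis, hf]
    simp [h0, degZ_zero]
  set jstar : Fin m := pv istar with hjstar
  -- generic upper bound for each term
  have hterm_le : ∀ (k i : Fin m), degZ (u i * R i k) + (s k : WithBot ℤ) ≤ f i := by
    intro k i
    rw [degZ_mul, add_assoc]
    exact add_le_add_right (entry_le_sdeg s (R i) k) _
  -- strict bound past the pivot
  have hlt : ∀ (k i : Fin m), pv i < k → degZ (u i * R i k) + (s k : WithBot ℤ) < M := by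
    intro k i hik
    by_cases hui : u i = 0
    · rw [hui, zero_mul, degZ_zero, WithBot.bot_add]
      exact hMpos
    · have hstrict : degZ (R i k) + (s k : WithBot ℤ) < sdeg s (R i) :=
        lt_of_le_of_ne (entry_le_sdeg s (R i) k) ((hpv i).2 k hik)
      have : degZ (u i * R i k) + (s k : WithBot ℤ) < f i := by
        rw [degZ_mul, add_assoc]
        exact WithBot.add_lt_add_left (degZ_ne_bot hui) hstrict
      exact lt_of_lt_of_le this (Finset.le_sup (Finset.mem_univ i))
  -- strict bound in column jstar for i ≠ istar
  have hlt' : ∀ i, i ≠ istar → degZ (u i * R i jstar) + (s jstar : WithBot ℤ) < M := by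
    intro i hne
    rcases lt_or_eq_of_le (Finset.le_sup (f := f) (Finset.mem_univ i)) with hfi | hfi
    · exact lt_of_le_of_lt (hterm_le jstar i) hfi
    · have hiA : i ∈ A := Finset.mem_filter.mpr ⟨Finset.mem_univ i, hfi⟩
      have hle := hmax i hiA
      have hne' : pv i ≠ jstar := fun h => hne (hpvinj h)
      exact hlt jstar i (lt_of_le_of_ne hle hne')
  -- the main term
  have hmain : degZ (u istar * R istar jstar) + (s jstar : WithBot ℤ) = M := by
    rw [degZ_mul, add_assoc, (hpv istar).1]
    exact hfis
  -- degree of v at jstar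
  have hvj : degZ (v jstar) + (s jstar : WithBot ℤ) = M := by
    rw [hvdef jstar, ← Finset.add_sum_erase _ _ (Finset.mem_univ istar)]
    have hrest : degZ (∑ i ∈ Finset.univ.erase istar, u i * R i jstar)
        + (s jstar : WithBot ℤ) < M := by
      refine lt_of_le_of_lt (degZ_sum_add_le _ _ _) ?_
      rw [Finset.sup_lt_iff hMpos]
      intro i hi
      exact hlt' i (Finset.ne_of_mem_erase hi)
    have hcmp : degZ (∑ i ∈ Finset.univ.erase istar, u i * R i jstar)
        < degZ (u istar * R istar jstar) :=
      (WithBot.add_lt_add_iff_right (WithBot.coe_ne_bot (a := s jstar))).mp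
        (by rw [hmain]; exact hrest)
    rw [degZ_add_eq_left hcmp]
    exact hmain
  -- sdeg of v
  have hsv : sdeg s v = M := by
    refine le_antisymm (Finset.sup_le fun k _ => ?_) ?_
    · rw [hvdef k]
      refine (degZ_sum_add_le _ _ _).trans (Finset.sup_le fun i _ => ?_)
      exact (hterm_le k i).trans (Finset.le_sup (Finset.mem_univ i))
    · rw [← hvj]
      exact entry_le_sdeg s v jstar
  -- v has pivot index jstar
  have hpivv : IsPivotIndex s v jstar := by
    constructor
    · rw [hsv]; exact hvj
    · intro k hk
      rw [hsv]
      refine ne_of_lt ?_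
      rw [hvdef k]
      refine lt_of_le_of_lt (degZ_sum_add_le _ _ _) ?_
      rw [Finset.sup_lt_iff hMpos]
      intro i _
      rcases lt_or_eq_of_le (Finset.le_sup (f := f) (Finset.mem_univ i)) with hfi | hfi
      · exact lt_of_le_of_lt (hterm_le k i) hfi
      · have hiA : i ∈ A := Finset.mem_filter.mpr ⟨Finset.mem_univ i, hfi⟩
        exact hlt k i (lt_of_le_of_lt (hmax i hiA) hk)
  have hjj : j = jstar := pivot_unique hj hpivv
  refine ⟨istar, hjj ▸ rfl, ?_⟩
  have hveq : degZ (v jstar) = degZ (u istar) + degZ (R istar jstar) := by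
    have h2 : degZ (u istar * R istar jstar) + (s jstar : WithBot ℤ)
        = degZ (v jstar) + (s jstar : WithBot ℤ) := by rw [hmain, hvj]
    have := (WithBot.add_right_cancel WithBot.coe_ne_bot h2)
    rw [← this, degZ_mul]
  have : degZ (R istar jstar) ≤ degZ (v jstar) := by
    rw [hveq]
    calc degZ (R istar jstar) = 0 + degZ (R istar jstar) := (zero_add _).symm
      _ ≤ degZ (u istar) + degZ (R istar jstar) :=
        add_le_add_left (zero_le_degZ huis) _
  rw [hjj]
  exact this

end Helpers

/-- if `P` is nonsingular in `s`-weak Popov form with `s`-pivot degree `δ`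
and `Q` is in `s`-Popov form, left-unimodularly equivalent to `P`, then the column
degree of `Q` is `δ`, i.e. `deg Q j j = δ j` for all `j`. -/
theorem popov_form_column_degree_eq_pivot_degree {K : Type*} [Field K] {m : ℕ}
    (hm : 1 ≤ m) (s : Fin m → ℤ)
    (P Q U : Matrix (Fin m) (Fin m) (Polynomial K))
    (hPdet : P.det ≠ 0) (piv : Fin m → Fin m)
    (hpiv : ∀ i, IsPivotIndex s (P i) (piv i)) (hinj : Function.Injective piv)
    (δ : Fin m → ℕ) (hδ : ∀ i, (P i (piv i)).natDegree = δ (piv i))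
    (hQ : IsPopov s Q)
    (hU : ∃ c : K, c ≠ 0 ∧ U.det = Polynomial.C c) (hQU : Q = U * P) :
    ∀ j, (Q j j).natDegree = δ j := by
  classical
  obtain ⟨hQdet, hQpiv, hQmon, _⟩ := hQ
  have hProw : ∀ i, P i ≠ 0 := by
    intro i h0
    exact hPdet (Matrix.det_eq_zero_of_row_eq_zero i (fun k => congrFun h0 k))
  have hQrow : ∀ i, Q i ≠ 0 := by
    intro i h0
    exact hQdet (Matrix.det_eq_zero_of_row_eq_zero i (fun k => congrFun h0 k))
  obtain ⟨c, hc, hdet⟩ := hU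
  have hUdet : IsUnit U.det := by
    rw [hdet]; exact Polynomial.isUnit_C.mpr hc.isUnit
  have hPUQ : P = U⁻¹ * Q := by
    rw [hQU, ← Matrix.mul_assoc, Matrix.nonsing_inv_mul U hUdet, Matrix.one_mul]
  intro j
  -- Direction 1 : δ j ≤ natDegree (Q j j)
  have hdir1 : δ j ≤ (Q j j).natDegree := by
    have hvdef : ∀ k, Q j k = ∑ i, U j i * P i k := by
      intro k; rw [hQU]; exact Matrix.mul_apply
    obtain ⟨i, hpi, hle⟩ := key_lemma hinj hProw hpiv (U j) hvdef (hQrow j) (hQpiv j)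
    have hPne : P i (piv i) ≠ 0 := pivot_entry_ne_zero (hpiv i) (hProw i)
    have hQne : Q j j ≠ 0 := (hQmon j).ne_zero
    have h1 : degZ (P i j) = ((δ j : ℤ) : WithBot ℤ) := by
      rw [← hpi, degZ_eq_natDegree hPne, hδ i]
    rw [h1, degZ_eq_natDegree hQne] at hle
    exact_mod_cast hle
  -- Direction 2 : natDegree (Q j j) ≤ δ j
  have hdir2 : (Q j j).natDegree ≤ δ j := by
    obtain ⟨i, hpi⟩ := (Finite.injective_iff_surjective.mp hinj) j
    have hvdef : ∀ k, P i k = ∑ l, U⁻¹ i l * Q l k := by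
      intro k; rw [hPUQ]; exact Matrix.mul_apply
    have hjP : IsPivotIndex s (P i) j := hpi ▸ hpiv i
    obtain ⟨l, hl, hle⟩ := key_lemma (pv := id) Function.injective_id hQrow hQpiv
      (U⁻¹ i) hvdef (hProw i) hjP
    have hQne : Q j j ≠ 0 := (hQmon j).ne_zero
    have hPne : P i j ≠ 0 := by rw [← hpi]; exact pivot_entry_ne_zero (hpiv i) (hProw i)
    have hl' : l = j := hl
    rw [hl'] at hle
    rw [degZ_eq_natDegree hPne, degZ_eq_natDegree hQne] at hle
    have : (Q j j).natDegree ≤ (P i j).natDegree := by exact_mod_cast hle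
    rw [← hpi, hδ i, hpi] at this
    exact this
  omega
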